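/- The shift graph G_{9,2} does not have the AOP property; that is, for every acyclic orientation of G_{9,2} there exist two vertices with two distinct directed paths from one to the other. -/

import Mathlib

open SimpleGraph

/-- The shift graph `G_{n,2}`: vertices are pairs `(i,j)` with `i < j` in `Fin n`,
and `(i,j)` is adjacent to `(k,l)` iff `j = k` or `l = i`. -/
def ShiftGraph (n : ℕ) : SimpleGraph {p : Fin n × Fin n // p.1 < p.2} :=
  SimpleGraph.fromRel (fun p q => p.1.2 = q.1.1)

/-- The arcs of a digraph `D`. -/
def Arcs {V : Type} (D : V → V → Prop) : Type := {e : V × V // D e.1 e.2}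

/-- The line digraph `L⃗(D)`: there is an arc from `(a,b)` to `(c,d)` iff `b = c`. -/
def LineDigraph {V : Type} (D : V → V → Prop) : Arcs D → Arcs D → Prop :=
  fun e f => e.1.2 = f.1.1

/-- The underlying undirected (simple) graph of a digraph. -/
def UG {V : Type} (D : V → V → Prop) : SimpleGraph V := SimpleGraph.fromRel D

/-- The undirected line graph `L(D)`: the underlying undirected graph of the line digraph,
in which two arcs are adjacent iff the head of one equals the tail of the other. -/
def LineGraph {V : Type} (D : V → V → Prop) : SimpleGraph (Arcs D) :=
  UG (LineDigraph D)

/-- A digraph is an oriented graph if its arc relation is irreflexive and between any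
two vertices at most one of the two opposite arcs is present. -/
def Oriented {V : Type} (D : V → V → Prop) : Prop :=
  Irreflexive D ∧ ∀ a b, D a b → ¬ D b a

/-- A digraph is acyclic if it contains no directed cycle, equivalently no vertex is
reachable from itself by a nonempty directed walk. -/
def DigraphAcyclic {V : Type} (D : V → V → Prop) : Prop :=
  ∀ v, ¬ Relation.TransGen D v v

/-- The iterated line digraph: `(IterLine V D g).1` is the vertex type of `L⃗^g(D)` and
`(IterLine V D g).2` is its arc relation. -/
def IterLine (V : Type) (D : V → V → Prop) : ℕ → (W : Type) × (W → W → Prop)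
  | 0 => ⟨V, D⟩
  | g + 1 => ⟨Arcs (IterLine V D g).2, LineDigraph (IterLine V D g).2⟩

/-- `l` is (the list of vertices of) a directed path from `x` to `y` in the digraph `D`:
consecutive vertices are joined by arcs, the vertices are pairwise distinct, and the
list starts at `x` and ends at `y`. -/
def IsDipath {V : Type} (D : V → V → Prop) (x y : V) (l : List V) : Prop :=
  l.Chain' D ∧ l.head? = some x ∧ l.getLast? = some y ∧ l.Nodup

/-- A digraph has at most one directed path from any vertex to any other vertex. -/
def UniqueDipaths {V : Type} (D : V → V → Prop) : Prop :=
  ∀ x y l₁ l₂, IsDipath D x y l₁ → IsDipath D x y l₂ → l₁ = l₂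

/-- `D` is an orientation of the simple graph `G`. -/
def IsOrientationOf {V : Type} (G : SimpleGraph V) (D : V → V → Prop) : Prop :=
  (∀ a b, D a b → G.Adj a b) ∧ (∀ a b, G.Adj a b → (D a b ∨ D b a)) ∧
    (∀ a b, D a b → ¬ D b a)

/-- A simple graph has the AOP property if it admits an acyclic orientation with at most
one directed path between any ordered pair of vertices. -/
def HasAOP {V : Type} (G : SimpleGraph V) : Prop :=
  ∃ D : V → V → Prop, IsOrientationOf G D ∧ DigraphAcyclic D ∧ UniqueDipaths D

/-- The tower function: `Tower g x` is `2^(2^(⋯^x))` with `g` twos. -/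
def Tower : ℕ → ℕ → ℕ
  | 0, x => x
  | i + 1, x => 2 ^ Tower i x

/-- The graph `G` has degeneracy at most `k`: every nonempty (induced subgraph on a) set
of vertices contains a vertex with at most `k` neighbours inside the set. -/
def DegenLE {V : Type} (G : SimpleGraph V) (k : ℕ) : Prop :=
  ∀ s : Set V, s.Nonempty → ∃ v ∈ s, ({u ∈ s | G.Adj v u} : Set V).ncard ≤ k

abbrev V9 := {p : Fin 9 × Fin 9 // p.1 < p.2}

def vt (i j : ℕ) (hij : i < j) (hj : j < 9) : V9 :=
  ⟨(⟨i, hij.trans hj⟩, ⟨j, hj⟩), Fin.mk_lt_mk.mpr hij⟩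

lemma vt_ne {i j k l : ℕ} {hij : i < j} {hj : j < 9} {hkl : k < l} {hl : l < 9}
    (h : i ≠ k ∨ j ≠ l) : vt i j hij hj ≠ vt k l hkl hl := by
  intro he
  have h1 : i = k := congrArg (fun v : V9 => (v.1.1 : ℕ)) he
  have h2 : j = l := congrArg (fun v : V9 => (v.1.2 : ℕ)) he
  rcases h with h | h <;> exact h (by assumption)

lemma adj_vt {i j k : ℕ} (hij : i < j) (hjk : j < k) (hk : k < 9) :
    (ShiftGraph 9).Adj (vt i j hij (hjk.trans hk)) (vt j k hjk hk) := by
  show (SimpleGraph.fromRel _).Adj _ _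
  rw [SimpleGraph.fromRel_adj]
  exact ⟨vt_ne (Or.inl hij.ne), Or.inl rfl⟩

section Paths
variable {V : Type} {D : V → V → Prop}

lemma dipath_two {x y : V} (h : D x y) (hxy : x ≠ y) : IsDipath D x y [x, y] :=
  ⟨by simp [List.Chain', h], rfl, by simp, by simp [hxy]⟩

lemma dipath_three {x a y : V} (h1 : D x a) (h2 : D a y)
    (hxa : x ≠ a) (hxy : x ≠ y) (hay : a ≠ y) : IsDipath D x y [x, a, y] :=
  ⟨by simp [List.Chain', h1, h2], rfl, by simp, by simp [hxa, hxy, hay]⟩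

lemma dipath_four {x a b y : V} (h1 : D x a) (h2 : D a b) (h3 : D b y)
    (hxa : x ≠ a) (hxb : x ≠ b) (hxy : x ≠ y) (hab : a ≠ b) (hay : a ≠ y) (hby : b ≠ y) :
    IsDipath D x y [x, a, b, y] :=
  ⟨by simp [List.Chain', h1, h2, h3], rfl, by simp, by simp [hxa, hxb, hxy, hab, hay, hby]⟩

lemma no22 (hU : UniqueDipaths D) {x a b y : V} (hab : a ≠ b)
    (hxa : x ≠ a) (hay : a ≠ y) (hxb : x ≠ b) (hby : b ≠ y) (hxy : x ≠ y)
    (h1 : D x a) (h2 : D a y) (h3 : D x b) (h4 : D b y) : False := by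
  have h := hU x y [x, a, y] [x, b, y] (dipath_three h1 h2 hxa hxy hay)
    (dipath_three h3 h4 hxb hxy hby)
  simp only [List.cons.injEq] at h
  exact hab h.2.1

lemma no13 (hU : UniqueDipaths D) {x a b y : V}
    (hxy : x ≠ y) (hxa : x ≠ a) (hxb : x ≠ b) (hab : a ≠ b) (hay : a ≠ y) (hby : b ≠ y)
    (h0 : D x y) (h1 : D x a) (h2 : D a b) (h3 : D b y) : False := by
  have h := hU x y [x, y] [x, a, b, y] (dipath_two h0 hxy)
    (dipath_four h1 h2 h3 hxa hxb hxy hab hay hby)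
  simp at h

lemma no23 (hU : UniqueDipaths D) {x a b c y : V}
    (hxa : x ≠ a) (hay : a ≠ y) (hxy : x ≠ y)
    (hxb : x ≠ b) (hxc : x ≠ c) (hbc : b ≠ c) (hby : b ≠ y) (hcy : c ≠ y)
    (h1 : D x a) (h2 : D a y) (h3 : D x b) (h4 : D b c) (h5 : D c y) : False := by
  have h := hU x y [x, a, y] [x, b, c, y] (dipath_three h1 h2 hxa hxy hay)
    (dipath_four h3 h4 h5 hxb hxc hxy hbc hby hcy)
  simp at h

end Paths

/-- `Ar D i j k` : the edge between `(i,j)` and `(j,k)` is oriented forwards. -/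
def Ar (D : V9 → V9 → Prop) (i j k : ℕ) : Prop :=
  ∀ (hij : i < j) (hjk : j < k) (hk : k < 9),
    D (vt i j hij (hjk.trans hk)) (vt j k hjk hk)

structure Good (D : V9 → V9 → Prop) : Prop where
  tot : ∀ a b, (ShiftGraph 9).Adj a b → D a b ∨ D b a
  asym : ∀ a b, D a b → ¬ D b a
  uniq : UniqueDipaths D

section Main
variable {D : V9 → V9 → Prop} (hG : Good D)

lemma hAr {i j k : ℕ} (hij : i < j) (hjk : j < k) (hk : k < 9) :
    Ar D i j k ↔ D (vt i j hij (hjk.trans hk)) (vt j k hjk hk) :=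
  ⟨fun h => h _ _ _, fun h _ _ _ => h⟩

include hG

lemma hAr' {i j k : ℕ} (hij : i < j) (hjk : j < k) (hk : k < 9) :
    ¬ Ar D i j k ↔ D (vt j k hjk hk) (vt i j hij (hjk.trans hk)) := by
  rcases hG.tot _ _ (adj_vt hij hjk hk) with h | h
  · constructor
    · intro hn; exact absurd ((hAr hij hjk hk).mpr h) hn
    · intro h2; exact absurd h (hG.asym _ _ h2)
  · constructor
    · intro _; exact h
    · intro _ hA; exact hG.asym _ _ ((hAr hij hjk hk).mp hA) h

/-- Two 2-paths `(i,j)→(j,m)→(h,j)` and `(i,j)→(j,m')→(h,j)` are forbidden. -/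
lemma U2a {i h j m m' : ℕ} (hih : i ≠ h) (hmm : m ≠ m')
    (hi : i < j) (hh : h < j) (hm : j < m) (hm' : j < m') (h9 : m < 9) (h9' : m' < 9)
    (a1 : Ar D i j m) (a2 : ¬ Ar D h j m) (a3 : Ar D i j m') (a4 : ¬ Ar D h j m') :
    False :=
  no22 hG.uniq (x := vt i j hi (hm.trans h9)) (a := vt j m hm h9)
    (b := vt j m' hm' h9') (y := vt h j hh (hm.trans h9))
    (vt_ne (Or.inr hmm)) (vt_ne (Or.inl hi.ne)) (vt_ne (Or.inl hh.ne'))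
    (vt_ne (Or.inl hi.ne)) (vt_ne (Or.inl hh.ne')) (vt_ne (Or.inl hih))
    ((hAr hi hm h9).mp a1) ((hAr' hG hh hm h9).mp a2)
    ((hAr hi hm' h9').mp a3) ((hAr' hG hh hm' h9').mp a4)

/-- Two 2-paths `(j,k)→(h,j)→(j,k')` and `(j,k)→(h',j)→(j,k')` are forbidden. -/
lemma U2b {h h' j k k' : ℕ} (hhh : h ≠ h') (hkk : k ≠ k')
    (hh : h < j) (hh' : h' < j) (hk : j < k) (hk' : j < k') (h9 : k < 9) (h9' : k' < 9)
    (a1 : ¬ Ar D h j k) (a2 : Ar D h j k') (a3 : ¬ Ar D h' j k) (a4 : Ar D h' j k') :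
    False :=
  no22 hG.uniq (x := vt j k hk h9) (a := vt h j hh (hk.trans h9))
    (b := vt h' j hh' (hk.trans h9)) (y := vt j k' hk' h9')
    (vt_ne (Or.inl hhh)) (vt_ne (Or.inl hh.ne')) (vt_ne (Or.inl hh.ne))
    (vt_ne (Or.inl hh'.ne')) (vt_ne (Or.inl hh'.ne)) (vt_ne (Or.inr hkk))
    ((hAr' hG hh hk h9).mp a1) ((hAr hh hk' h9').mp a2)
    ((hAr' hG hh' hk h9).mp a3) ((hAr hh' hk' h9').mp a4)

/-- Direct arc `(i,j)→(j,k)` plus 3-path `(i,j)→(j,m)→(h,j)→(j,k)` forbidden. -/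
lemma U31 {i h j k m : ℕ} (hih : i ≠ h) (hkm : k ≠ m)
    (hi : i < j) (hh : h < j) (hk : j < k) (hm : j < m) (h9 : k < 9) (h9' : m < 9)
    (a1 : Ar D i j k) (a2 : Ar D i j m) (a3 : ¬ Ar D h j m) (a4 : Ar D h j k) :
    False :=
  no13 hG.uniq (x := vt i j hi (hk.trans h9)) (a := vt j m hm h9')
    (b := vt h j hh (hk.trans h9)) (y := vt j k hk h9)
    (vt_ne (Or.inl hi.ne)) (vt_ne (Or.inl hi.ne)) (vt_ne (Or.inl hih))
    (vt_ne (Or.inl hh.ne')) (vt_ne (Or.inr (Ne.symm hkm))) (vt_ne (Or.inl hh.ne))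
    ((hAr hi hk h9).mp a1) ((hAr hi hm h9').mp a2)
    ((hAr' hG hh hm h9').mp a3) ((hAr hh hk h9).mp a4)

/-- Reversed version of `U31`. -/
lemma U31' {i h j k m : ℕ} (hih : i ≠ h) (hkm : k ≠ m)
    (hi : i < j) (hh : h < j) (hk : j < k) (hm : j < m) (h9 : k < 9) (h9' : m < 9)
    (a1 : ¬ Ar D i j k) (a2 : ¬ Ar D i j m) (a3 : Ar D h j m) (a4 : ¬ Ar D h j k) :
    False :=
  no13 hG.uniq (x := vt j k hk h9) (a := vt h j hh (hk.trans h9))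
    (b := vt j m hm h9') (y := vt i j hi (hk.trans h9))
    (vt_ne (by omega)) (vt_ne (by omega)) (vt_ne (by omega))
    (vt_ne (by omega)) (vt_ne (by omega)) (vt_ne (by omega))
    ((hAr' hG hi hk h9).mp a1) ((hAr' hG hh hk h9).mp a4)
    ((hAr hh hm h9').mp a3) ((hAr' hG hi hm h9').mp a2)

/-- 2-path `(a,j)→(j,l)→(l,m)` plus 3-path `(a,j)→(j,k)→(k,l)→(l,m)` forbidden. -/
lemma U23F {a j k l m : ℕ} (haj : a < j) (hjk : j < k) (hkl : k < l) (hlm : l < m)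
    (h9 : m < 9)
    (a1 : Ar D a j l) (a2 : Ar D j l m) (a3 : Ar D a j k) (a4 : Ar D j k l)
    (a5 : Ar D k l m) : False := by
  have hjl : j < l := hjk.trans hkl
  have hl9 : l < 9 := hlm.trans h9
  exact no23 hG.uniq (x := vt a j haj (hjl.trans hl9)) (a := vt j l hjl hl9)
    (b := vt j k hjk (hkl.trans hl9)) (c := vt k l hkl hl9) (y := vt l m hlm h9)
    (vt_ne (by omega)) (vt_ne (by omega)) (vt_ne (by omega))
    (vt_ne (by omega)) (vt_ne (by omega)) (vt_ne (by omega))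
    (vt_ne (by omega)) (vt_ne (by omega))
    ((hAr haj hjl hl9).mp a1) ((hAr hjl hlm h9).mp a2)
    ((hAr haj hjk (hkl.trans hl9)).mp a3) ((hAr hjk hkl hl9).mp a4)
    ((hAr hkl hlm h9).mp a5)

/-- Reversed version of `U23F`. -/
lemma U23B {a j k l m : ℕ} (haj : a < j) (hjk : j < k) (hkl : k < l) (hlm : l < m)
    (h9 : m < 9)
    (a1 : ¬ Ar D a j l) (a2 : ¬ Ar D j l m) (a3 : ¬ Ar D a j k) (a4 : ¬ Ar D j k l)
    (a5 : ¬ Ar D k l m) : False := by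
  have hjl : j < l := hjk.trans hkl
  have hl9 : l < 9 := hlm.trans h9
  exact no23 hG.uniq (x := vt l m hlm h9) (a := vt j l hjl hl9)
    (b := vt k l hkl hl9) (c := vt j k hjk (hkl.trans hl9)) (y := vt a j haj (hjl.trans hl9))
    (vt_ne (by omega)) (vt_ne (by omega)) (vt_ne (by omega))
    (vt_ne (by omega)) (vt_ne (by omega)) (vt_ne (by omega))
    (vt_ne (by omega)) (vt_ne (by omega))
    ((hAr' hG hjl hlm h9).mp a2) ((hAr' hG haj hjl hl9).mp a1)
    ((hAr' hG hkl hlm h9).mp a5) ((hAr' hG hjk hkl hl9).mp a4)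
    ((hAr' hG haj hjk (hkl.trans hl9)).mp a3)

/-- The 2×2 parity constraint at a hinge `j`. -/
lemma PAR {i h j k m : ℕ} (hih : i ≠ h) (hkm : k ≠ m)
    (hi : i < j) (hh : h < j) (hk : j < k) (hm : j < m) (h9 : k < 9) (h9' : m < 9) :
    ((Ar D i j k ↔ Ar D i j m) ↔ (Ar D h j k ↔ Ar D h j m)) := by
  by_cases hik : Ar D i j k <;> by_cases him : Ar D i j m <;>
    by_cases hhk : Ar D h j k <;> by_cases hhm : Ar D h j m
  all_goals first
    | exact iff_of_true (iff_of_true hik him) (iff_of_true hhk hhm)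
    | exact iff_of_true (iff_of_true hik him) (iff_of_false hhk hhm)
    | exact iff_of_true (iff_of_false hik him) (iff_of_true hhk hhm)
    | exact iff_of_true (iff_of_false hik him) (iff_of_false hhk hhm)
    | exact iff_of_false (fun w => him (w.mp hik)) (fun w => hhm (w.mp hhk))
    | exact iff_of_false (fun w => him (w.mp hik)) (fun w => hhk (w.mpr hhm))
    | exact iff_of_false (fun w => hik (w.mpr him)) (fun w => hhm (w.mp hhk))
    | exact iff_of_false (fun w => hik (w.mpr him)) (fun w => hhk (w.mpr hhm))
    | exact (U31 hG hih hkm hi hh hk hm h9 h9' hik him hhm hhk).elim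
    | exact (U31 hG hih hkm.symm hi hh hm hk h9' h9 him hik hhk hhm).elim
    | exact (U31 hG hih.symm hkm hh hi hk hm h9 h9' hhk hhm him hik).elim
    | exact (U31 hG hih.symm hkm.symm hh hi hm hk h9' h9 hhm hhk hik him).elim
    | exact (U31' hG hih hkm hi hh hk hm h9 h9' hik him hhm hhk).elim
    | exact (U31' hG hih hkm.symm hi hh hm hk h9' h9 him hik hhk hhm).elim
    | exact (U31' hG hih.symm hkm hh hi hk hm h9 h9' hhk hhm him hik).elim
    | exact (U31' hG hih.symm hkm.symm hh hi hm hk h9' h9 hhm hhk hik him).elim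

/-- At a hinge `2 ≤ j ≤ 5` (at least 3 columns), any two rows agree. -/
lemma rowsEq {j : ℕ} (h2 : 2 ≤ j) (h5 : j ≤ 5) {i h k : ℕ}
    (hi : i < j) (hh : h < j) (hk : j < k) (h9 : k < 9) :
    (Ar D i j k ↔ Ar D h j k) := by
  by_contra hne
  have hih : i ≠ h := by rintro rfl; exact hne Iff.rfl
  -- the two rows differ in every column
  have hdiff : ∀ m, j < m → m < 9 → ¬ (Ar D i j m ↔ Ar D h j m) := by
    intro m hm hm9
    rcases eq_or_ne k m with rfl | hkm
    · exact hne
    · intro hcon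
      have p := PAR hG hih hkm hi hh hk hm h9 hm9
      apply hne
      by_cases hb : Ar D i j m
      · have hd := hcon.mp hb
        constructor
        · intro ha; exact (p.mp (iff_of_true ha hb)).mpr hd
        · intro hc; exact (p.mpr (iff_of_true hc hd)).mpr hb
      · have hd : ¬ Ar D h j m := fun w => hb (hcon.mpr w)
        constructor
        · intro ha; by_contra hc
          exact hb ((p.mpr (iff_of_false hc hd)).mp ha)
        · intro hc; by_contra ha
          exact hd ((p.mp (iff_of_false ha hb)).mp hc)
  -- pigeonhole among three columns
  have pair : ∀ m m', j < m → j < m' → m < 9 → m' < 9 → m ≠ m' →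
      (Ar D i j m ↔ Ar D i j m') → False := by
    intro m m' hm hm' hm9 hm9' hmm hcon
    have d1 := hdiff m hm hm9
    have d2 := hdiff m' hm' hm9'
    by_cases hb : Ar D i j m
    · have hb' : Ar D i j m' := hcon.mp hb
      exact U2a hG hih hmm hi hh hm hm' hm9 hm9' hb
        (fun hx => d1 (iff_of_true hb hx)) hb' (fun hx => d2 (iff_of_true hb' hx))
    · have hb' : ¬ Ar D i j m' := fun hx => hb (hcon.mpr hx)
      have ha : Ar D h j m := by by_contra hx; exact d1 (iff_of_false hb hx)
      have ha' : Ar D h j m' := by by_contra hx; exact d2 (iff_of_false hb' hx)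
      exact U2a hG hih.symm hmm hh hi hm hm' hm9 hm9' ha hb ha' hb'
  by_cases b1 : Ar D i j (j+1) <;> by_cases b2 : Ar D i j (j+2) <;>
    by_cases b3 : Ar D i j (j+3)
  all_goals first
    | exact pair (j+1) (j+2) (by omega) (by omega) (by omega) (by omega) (by omega)
        (iff_of_true b1 b2)
    | exact pair (j+1) (j+2) (by omega) (by omega) (by omega) (by omega) (by omega)
        (iff_of_false b1 b2)
    | exact pair (j+1) (j+3) (by omega) (by omega) (by omega) (by omega) (by omega)
        (iff_of_true b1 b3)
    | exact pair (j+1) (j+3) (by omega) (by omega) (by omega) (by omega) (by omega)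
        (iff_of_false b1 b3)
    | exact pair (j+2) (j+3) (by omega) (by omega) (by omega) (by omega) (by omega)
        (iff_of_true b2 b3)
    | exact pair (j+2) (j+3) (by omega) (by omega) (by omega) (by omega) (by omega)
        (iff_of_false b2 b3)

/-- At a hinge `2 ≤ j ≤ 5`, any two columns agree. -/
lemma colsEq {j : ℕ} (h2 : 2 ≤ j) (h5 : j ≤ 5) {h k k' : ℕ}
    (hh : h < j) (hk : j < k) (hk' : j < k') (h9 : k < 9) (h9' : k' < 9) :
    (Ar D h j k ↔ Ar D h j k') := by
  have CE : ∀ c c', j < c → j < c' → c < 9 → c' < 9 → ¬ Ar D h j c → Ar D h j c' →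
      False := by
    intro c c' hc hc' hc9 hc9' hn hy
    have hcc : c ≠ c' := by rintro rfl; exact hn hy
    have main : ∀ h'', h'' < j → h'' ≠ h → False := by
      intro h'' hlt hne'
      exact U2b hG hne'.symm hcc hh hlt hc hc' hc9 hc9' hn hy
        (fun w => hn ((rowsEq hG h2 h5 hlt hh hc hc9).mp w))
        ((rowsEq hG h2 h5 hlt hh hc' hc9').mpr hy)
    rcases eq_or_ne h 0 with rfl | h0
    · exact main 1 (by omega) (by omega)
    · exact main 0 (by omega) (Ne.symm h0)
  by_cases hb : Ar D h j k <;> by_cases hb' : Ar D h j k'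
  · exact iff_of_true hb hb'
  · exact (CE k' k hk' hk h9' h9 hb' hb).elim
  · exact (CE k k' hk hk' h9 h9' hb hb').elim
  · exact iff_of_false hb hb'

/-- At hinge 6, the two columns agree in every row. -/
lemma CE6 (h : ℕ) (hh : h < 6) : (Ar D h 6 7 ↔ Ar D h 6 8) := by
  by_contra hne
  have hall : ∀ i, i < 6 → ¬ (Ar D i 6 7 ↔ Ar D i 6 8) := by
    intro i hi
    rcases eq_or_ne i h with rfl | hih
    · exact hne
    · exact fun w => hne ((PAR hG hih (by omega) hi hh (by omega) (by omega)
        (by omega) (by omega)).mp w)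
  have pairR : ∀ r r', r < 6 → r' < 6 → r ≠ r' → (Ar D r 6 7 ↔ Ar D r' 6 7) →
      False := by
    intro r r' hr hr' hrr hcon
    have d1 := hall r hr
    have d2 := hall r' hr'
    by_cases hb : Ar D r 6 7
    · have hb' := hcon.mp hb
      exact U2b hG hrr (by omega) hr hr' (by omega) (by omega) (by omega) (by omega)
        (fun w => d1 (iff_of_true hb w)) hb (fun w => d2 (iff_of_true hb' w)) hb'
    · have hb' : ¬ Ar D r' 6 7 := fun w => hb (hcon.mpr w)
      have y1 : Ar D r 6 8 := by by_contra w; exact d1 (iff_of_false hb w)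
      have y2 : Ar D r' 6 8 := by by_contra w; exact d2 (iff_of_false hb' w)
      exact U2b hG hrr (by omega) hr hr' (by omega) (by omega) (by omega) (by omega)
        hb y1 hb' y2
  by_cases r0 : Ar D 0 6 7 <;> by_cases r1 : Ar D 1 6 7 <;> by_cases r2 : Ar D 2 6 7
  all_goals first
    | exact pairR 0 1 (by omega) (by omega) (by omega) (iff_of_true r0 r1)
    | exact pairR 0 1 (by omega) (by omega) (by omega) (iff_of_false r0 r1)
    | exact pairR 0 2 (by omega) (by omega) (by omega) (iff_of_true r0 r2)
    | exact pairR 0 2 (by omega) (by omega) (by omega) (iff_of_false r0 r2)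
    | exact pairR 1 2 (by omega) (by omega) (by omega) (iff_of_true r1 r2)
    | exact pairR 1 2 (by omega) (by omega) (by omega) (iff_of_false r1 r2)

/-- At hinge 6, any two rows agree. -/
lemma RE6 {i h k : ℕ} (hi : i < 6) (hh : h < 6) (hk : 6 < k) (h9 : k < 9) :
    (Ar D i 6 k ↔ Ar D h 6 k) := by
  by_contra hne
  have hih : i ≠ h := by rintro rfl; exact hne Iff.rfl
  have k78 : k = 7 ∨ k = 8 := by omega
  by_cases hb : Ar D i 6 k
  · have hnh : ¬ Ar D h 6 k := fun w => hne (iff_of_true hb w)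
    rcases k78 with rfl | rfl
    · exact U2a hG hih (by omega) hi hh (by omega) (by omega) (by omega) (by omega)
        hb hnh ((CE6 hG i hi).mp hb) (fun w => hnh ((CE6 hG h hh).mpr w))
    · exact U2a hG hih (by omega) hi hh (by omega) (by omega) (by omega) (by omega)
        hb hnh ((CE6 hG i hi).mpr hb) (fun w => hnh ((CE6 hG h hh).mp w))
  · have hah : Ar D h 6 k := by by_contra w; exact hne (iff_of_false hb w)
    rcases k78 with rfl | rfl
    · exact U2a hG hih.symm (by omega) hh hi (by omega) (by omega) (by omega) (by omega)
        hah hb ((CE6 hG h hh).mp hah) (fun w => hb ((CE6 hG i hi).mpr w))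
    · exact U2a hG hih.symm (by omega) hh hi (by omega) (by omega) (by omega) (by omega)
        hah hb ((CE6 hG h hh).mpr hah) (fun w => hb ((CE6 hG i hi).mp w))

/-- Every hinge `2 ≤ j ≤ 6` is constant. -/
lemma constH {j : ℕ} (h2 : 2 ≤ j) (h6 : j ≤ 6) {i k : ℕ}
    (hi : i < j) (hk : j < k) (h9 : k < 9) : (Ar D i j k ↔ Ar D 0 j 8) := by
  rcases Nat.lt_or_ge j 6 with h5 | h5
  · have h5' : j ≤ 5 := by omega
    exact ((colsEq hG h2 h5' hi hk (by omega) h9 (by omega)).trans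
      (rowsEq hG h2 h5' hi (by omega) (by omega) (by omega)))
  · have hj6 : j = 6 := by omega
    subst hj6
    have k78 : k = 7 ∨ k = 8 := by omega
    rcases k78 with rfl | rfl
    · exact (CE6 hG i hi).trans (RE6 hG hi (by omega) (by omega) (by omega))
    · exact RE6 hG hi (by omega) hk h9

/-- No three hinges in `{2,…,6}` can all be oriented forwards. -/
lemma keyT {j k l : ℕ} (h2 : 2 ≤ j) (hjk : j < k) (hkl : k < l) (h6 : l ≤ 6)
    (dj : Ar D 0 j 8) (dk : Ar D 0 k 8) (dl : Ar D 0 l 8) : False :=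
  U23F hG (show 0 < j by omega) hjk hkl (show l < 8 by omega) (by omega)
    ((constH hG h2 (by omega) (by omega) (by omega) (by omega)).mpr dj)
    ((constH hG (by omega) h6 (by omega) (by omega) (by omega)).mpr dl)
    ((constH hG h2 (by omega) (by omega) hjk (by omega)).mpr dj)
    ((constH hG (by omega) (by omega) hjk hkl (by omega)).mpr dk)
    ((constH hG (by omega) h6 hkl (by omega) (by omega)).mpr dl)

/-- No three hinges in `{2,…,6}` can all be oriented backwards. -/
lemma keyB {j k l : ℕ} (h2 : 2 ≤ j) (hjk : j < k) (hkl : k < l) (h6 : l ≤ 6)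
    (dj : ¬ Ar D 0 j 8) (dk : ¬ Ar D 0 k 8) (dl : ¬ Ar D 0 l 8) : False :=
  U23B hG (show 0 < j by omega) hjk hkl (show l < 8 by omega) (by omega)
    (fun w => dj ((constH hG h2 (by omega) (by omega) (by omega) (by omega)).mp w))
    (fun w => dl ((constH hG (by omega) h6 (by omega) (by omega) (by omega)).mp w))
    (fun w => dj ((constH hG h2 (by omega) (by omega) hjk (by omega)).mp w))
    (fun w => dk ((constH hG (by omega) (by omega) hjk hkl (by omega)).mp w))
    (fun w => dl ((constH hG (by omega) h6 hkl (by omega) (by omega)).mp w))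

end Main


/-- The shift graph `G_{9,2}` does not have the AOP property: there is
no acyclic orientation of it with at most one directed path between any ordered pair of
vertices. -/
theorem stmt_16 : ¬ HasAOP (ShiftGraph 9) := by
  rintro ⟨D, ⟨-, hTot, hAsym⟩, -, hU⟩
  have hG : Good D := ⟨hTot, hAsym, hU⟩
  by_cases d2 : Ar D 0 2 8 <;> by_cases d3 : Ar D 0 3 8 <;> by_cases d4 : Ar D 0 4 8 <;>
    by_cases d5 : Ar D 0 5 8 <;> by_cases d6 : Ar D 0 6 8
  all_goals first
    | exact keyT hG (by omega) (by omega) (by omega) (by omega) d2 d3 d4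
    | exact keyT hG (by omega) (by omega) (by omega) (by omega) d2 d3 d5
    | exact keyT hG (by omega) (by omega) (by omega) (by omega) d2 d3 d6
    | exact keyT hG (by omega) (by omega) (by omega) (by omega) d2 d4 d5
    | exact keyT hG (by omega) (by omega) (by omega) (by omega) d2 d4 d6
    | exact keyT hG (by omega) (by omega) (by omega) (by omega) d2 d5 d6
    | exact keyT hG (by omega) (by omega) (by omega) (by omega) d3 d4 d5
    | exact keyT hG (by omega) (by omega) (by omega) (by omega) d3 d4 d6
    | exact keyT hG (by omega) (by omega) (by omega) (by omega) d3 d5 d6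
    | exact keyT hG (by omega) (by omega) (by omega) (by omega) d4 d5 d6
    | exact keyB hG (by omega) (by omega) (by omega) (by omega) d2 d3 d4
    | exact keyB hG (by omega) (by omega) (by omega) (by omega) d2 d3 d5
    | exact keyB hG (by omega) (by omega) (by omega) (by omega) d2 d3 d6
    | exact keyB hG (by omega) (by omega) (by omega) (by omega) d2 d4 d5
    | exact keyB hG (by omega) (by omega) (by omega) (by omega) d2 d4 d6
    | exact keyB hG (by omega) (by omega) (by omega) (by omega) d2 d5 d6
    | exact keyB hG (by omega) (by omega) (by omega) (by omega) d3 d4 d5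
    | exact keyB hG (by omega) (by omega) (by omega) (by omega) d3 d4 d6
    | exact keyB hG (by omega) (by omega) (by omega) (by omega) d3 d5 d6
    | exact keyB hG (by omega) (by omega) (by omega) (by omega) d4 d5 d6
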